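/- (Criterion for uniqueness/non-explosion of birth-death processes.) A birth-death Q-matrix with rates b_i>0 (i≥0), a_i>0 (i≥1) is regular (the minimal process is non-explosive, equivalently the Q-process is unique) if and only if Σ_{n≥0} (1/(μ_n b_n)) Σ_{i=0}^n μ_i = ∞, where μ_0=1 and μ_i = b_0⋯b_{i-1}/(a_1⋯a_i). -/

import Mathlib

open Finset Filter

/-- Regularity (uniqueness / non-explosion) criterion for birth-death Q-matrices:
the only bounded nonnegative solution u of Qu = u is u ≡ 0 if and only if
Σ_n (1/(μ_n b_n)) Σ_{i=0}^n μ_i = ∞. -/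
theorem stmt10 (a b : ℕ → ℝ) (ha0 : a 0 = 0) (ha : ∀ i ≥ 1, 0 < a i) (hb : ∀ i, 0 < b i)
    (μ : ℕ → ℝ)
    (hμ : ∀ i, μ i = (∏ j ∈ Finset.range i, b j) / (∏ j ∈ Finset.range i, a (j+1))) :
    (∀ u : ℕ → ℝ, (∀ i, 0 ≤ u i) → (∃ Mu : ℝ, ∀ i, u i ≤ Mu) →
      (∀ i : ℕ, b i * (u (i+1) - u i) + a i * (u (i-1) - u i) = u i) →
      ∀ i, u i = 0) ↔
    ¬ Summable (fun n => (1/(μ n * b n)) * ∑ i ∈ Finset.range (n+1), μ i) := by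
  have hμpos : ∀ n, 0 < μ n := by
    intro n
    rw [hμ]
    exact div_pos (Finset.prod_pos fun j _ => hb j)
      (Finset.prod_pos fun j _ => ha (j+1) (Nat.le_add_left 1 j))
  have hμ0 : μ 0 = 1 := by simp [hμ]
  have hDpos : ∀ n, 0 < μ n * b n := fun n => mul_pos (hμpos n) (hb n)
  have hrec : ∀ n, μ (n+1) * a (n+1) = μ n * b n := by
    intro n
    have h1 : (∏ j ∈ Finset.range n, a (j+1)) ≠ 0 :=
      ne_of_gt (Finset.prod_pos fun j _ => ha (j+1) (Nat.le_add_left 1 j))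
    have h2 : a (n+1) ≠ 0 := ne_of_gt (ha (n+1) (Nat.le_add_left 1 n))
    rw [hμ, hμ, Finset.prod_range_succ, Finset.prod_range_succ]
    field_simp
  set r : ℕ → ℝ := fun n => (1/(μ n * b n)) * ∑ i ∈ Finset.range (n+1), μ i with hr
  have hrpos : ∀ n, 0 < r n := by
    intro n
    exact mul_pos (one_div_pos.mpr (hDpos n))
      (Finset.sum_pos (fun i _ => hμpos i) (by simp))
  constructor
  · -- uniqueness ⇒ divergence (contrapositive: summable ⇒ build a counterexample)
    intro H hsum
    -- construct the solution by recursion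
    set f : ℕ → ℝ × ℝ := fun n => Nat.rec (1, μ 0)
      (fun n p => (p.1 + p.2/(μ n * b n), p.2 + μ (n+1) * (p.1 + p.2/(μ n * b n)))) n with hf
    set u : ℕ → ℝ := fun n => (f n).1 with hu
    set S : ℕ → ℝ := fun n => (f n).2 with hS
    have hu0 : u 0 = 1 := rfl
    have hS0 : S 0 = μ 0 := rfl
    have hustep : ∀ n, u (n+1) = u n + S n/(μ n * b n) := fun n => rfl
    have hSstep : ∀ n, S (n+1) = S n + μ (n+1) * u (n+1) := fun n => rfl
    have hpos : ∀ n, 0 < u n ∧ 0 < S n := by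
      intro n
      induction n with
      | zero => exact ⟨one_pos, by rw [hS0]; exact hμpos 0⟩
      | succ n ih =>
        have hu' : 0 < u (n+1) := by
          rw [hustep]
          have := div_pos ih.2 (hDpos n)
          linarith [ih.1]
        refine ⟨hu', ?_⟩
        rw [hSstep]
        have := mul_pos (hμpos (n+1)) hu'
        linarith [ih.2]
    -- monotonicity
    have hmono : Monotone u := by
      apply monotone_nat_of_le_succ
      intro n
      rw [hustep]
      have := div_pos (hpos n).2 (hDpos n)
      linarith
    -- S n = ∑_{i ≤ n} μ i * u i
    have hSsum : ∀ n, S n = ∑ i ∈ Finset.range (n+1), μ i * u i := by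
      intro n
      induction n with
      | zero => rw [hS0]; simp [hu0]
      | succ n ih =>
        rw [hSstep, ih]
        exact (Finset.sum_range_succ _ (n+1)).symm
    -- u satisfies the Q-equation
    have hQ : ∀ i : ℕ, b i * (u (i+1) - u i) + a i * (u (i-1) - u i) = u i := by
      intro i
      cases i with
      | zero =>
        simp only [ha0, zero_mul, add_zero, Nat.zero_sub]
        rw [hustep 0, hS0, hμ0, hu0]
        have hb0 : b 0 ≠ 0 := ne_of_gt (hb 0)
        field_simp
        ring
      | succ n =>
        simp only [Nat.add_sub_cancel]
        have hμ2 : μ (n+1) ≠ 0 := ne_of_gt (hμpos (n+1))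
        have hb2 : b (n+1) ≠ 0 := ne_of_gt (hb (n+1))
        have ha2 : a (n+1) ≠ 0 := ne_of_gt (ha (n+1) (Nat.le_add_left 1 n))
        have e0 : u n - u (n+1) = -(S n / (μ (n+1) * a (n+1))) := by
          rw [hustep, hrec]; ring
        have e1 : u (n+1+1) - u (n+1) = S (n+1) / (μ (n+1) * b (n+1)) := by
          rw [hustep (n+1)]; ring
        rw [e0, e1, hSstep]
        field_simp
        ring
    -- boundedness : u n ≤ exp (∑_{k<n} r k)
    have hbound : ∀ n, u n ≤ Real.exp (∑ k ∈ Finset.range n, r k) := by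
      intro n
      induction n with
      | zero => simp [hu0]
      | succ n ih =>
        have hD : 0 < μ n * b n := hDpos n
        have hSle : S n ≤ u n * ∑ i ∈ Finset.range (n+1), μ i := by
          rw [hSsum, Finset.mul_sum]
          apply Finset.sum_le_sum
          intro i hi
          have h1 : u i ≤ u n := hmono (Nat.le_of_lt_succ (Finset.mem_range.mp hi))
          have h2 := (hμpos i).le
          nlinarith
        have hdivle : S n / (μ n * b n) ≤ (u n * ∑ i ∈ Finset.range (n+1), μ i) / (μ n * b n) := by
          gcongr
        have heq : (u n * ∑ i ∈ Finset.range (n+1), μ i) / (μ n * b n) = u n * r n := by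
          simp only [hr]; ring
        have h1 : u (n+1) ≤ u n * (1 + r n) := by
          rw [hustep]
          rw [heq] at hdivle
          nlinarith [(hpos n).1]
        have h3 : (1 + r n) ≤ Real.exp (r n) := by
          have := Real.add_one_le_exp (r n)
          linarith
        calc u (n+1) ≤ u n * (1 + r n) := h1
          _ ≤ Real.exp (∑ k ∈ Finset.range n, r k) * (1 + r n) := by
              have : (0:ℝ) ≤ 1 + r n := by linarith [(hrpos n).le]
              nlinarith
          _ ≤ Real.exp (∑ k ∈ Finset.range n, r k) * Real.exp (r n) := by
              nlinarith [Real.exp_pos (∑ k ∈ Finset.range n, r k)]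
          _ = Real.exp (∑ k ∈ Finset.range (n+1), r k) := by
              rw [Finset.sum_range_succ, Real.exp_add]
    have hMu : ∀ n, u n ≤ Real.exp (∑' k, r k) := by
      intro n
      refine le_trans (hbound n) (Real.exp_le_exp.mpr ?_)
      exact Summable.sum_le_tsum _ (fun k _ => (hrpos k).le) hsum
    have := H u (fun i => (hpos i).1.le) ⟨Real.exp (∑' k, r k), hMu⟩ hQ 0
    rw [hu0] at this
    exact one_ne_zero this
  · -- divergence ⇒ uniqueness
    rintro hdiv u hu0 ⟨Mu, hMu⟩ hQ
    -- key identity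
    have hkey : ∀ n, μ n * b n * (u (n+1) - u n) = ∑ i ∈ Finset.range (n+1), μ i * u i := by
      intro n
      induction n with
      | zero =>
        have h := hQ 0
        simp only [ha0, zero_mul, add_zero] at h
        simp [Finset.sum_range_one, hμ0]
        linarith
      | succ n ih =>
        have h := hQ (n+1)
        simp only [Nat.add_sub_cancel] at h
        rw [Finset.sum_range_succ, ← ih]
        linear_combination μ (n+1) * h + (u (n+1) - u n) * hrec n
    have hd : ∀ n, 0 ≤ u (n+1) - u n := by
      intro n
      have h1 : 0 ≤ ∑ i ∈ Finset.range (n+1), μ i * u i :=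
        Finset.sum_nonneg fun i _ => mul_nonneg (hμpos i).le (hu0 i)
      rw [← hkey] at h1
      exact nonneg_of_mul_nonneg_right h1 (hDpos n)
    have hmono : Monotone u := monotone_nat_of_le_succ (fun n => by linarith [hd n])
    intro m
    by_contra hm
    have hum : 0 < u m := lt_of_le_of_ne (hu0 m) (Ne.symm hm)
    set c : ℝ := ∑ i ∈ Finset.range m, μ i with hc
    set t : ℕ → ℝ := fun n => ((∑ i ∈ Finset.range (n+1), μ i) - c) / (μ n * b n) with ht
    -- for n ≥ m, d n ≥ u m * t n
    have hdt : ∀ n, m ≤ n → u m * t n ≤ u (n+1) - u n := by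
      intro n hmn
      have hsplit : Finset.range (n+1) = Finset.range m ∪ Finset.Ico m (n+1) := by
        rw [Finset.range_eq_Ico]
        rw [Finset.range_eq_Ico, Finset.Ico_union_Ico_eq_Ico (Nat.zero_le m) (by omega : m ≤ n + 1)]
      have hdisj : Disjoint (Finset.range m) (Finset.Ico m (n+1)) := by
        simp only [Finset.disjoint_left, Finset.mem_range, Finset.mem_Ico]
        intro x hx h
        omega
      have hsum_split : (∑ i ∈ Finset.range (n+1), μ i) = c + ∑ i ∈ Finset.Ico m (n+1), μ i := by
        rw [hc, hsplit, Finset.sum_union hdisj]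
      have husum_split : (∑ i ∈ Finset.range (n+1), μ i * u i)
          = (∑ i ∈ Finset.range m, μ i * u i) + ∑ i ∈ Finset.Ico m (n+1), μ i * u i := by
        rw [hsplit, Finset.sum_union hdisj]
      have h3 : ∑ i ∈ Finset.Ico m (n+1), μ i * u m ≤ ∑ i ∈ Finset.Ico m (n+1), μ i * u i := by
        apply Finset.sum_le_sum
        intro i hi
        have h5 : u m ≤ u i := hmono (Finset.mem_Ico.mp hi).1
        nlinarith [hμpos i]
      have h4 : 0 ≤ ∑ i ∈ Finset.range m, μ i * u i :=
        Finset.sum_nonneg fun i _ => mul_nonneg (hμpos i).le (hu0 i)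
      have h5 : u m * ((∑ i ∈ Finset.range (n+1), μ i) - c)
          = ∑ i ∈ Finset.Ico m (n+1), μ i * u m := by
        rw [hsum_split, ← Finset.sum_mul]
        ring
      have h1 : u m * ((∑ i ∈ Finset.range (n+1), μ i) - c)
          ≤ ∑ i ∈ Finset.range (n+1), μ i * u i := by
        rw [h5, husum_split]
        linarith
      simp only [ht]
      rw [← mul_div_assoc, div_le_iff₀ (hDpos n),
        mul_comm (u (n+1) - u n) (μ n * b n), hkey]
      exact h1
    have htnonneg : ∀ n, m ≤ n → 0 ≤ t n := by
      intro n hmn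
      apply div_nonneg _ (hDpos n).le
      have hsub : Finset.range m ⊆ Finset.range (n+1) := Finset.range_subset_range.mpr (by omega)
      have := Finset.sum_le_sum_of_subset_of_nonneg hsub (fun i _ _ => (hμpos i).le)
      simp only [ht, hc]
      linarith
    -- t is not summable
    have htdiv : ¬ Summable (fun n => t (n + m)) := by
      intro hts'
      have hts : Summable t := (summable_nat_add_iff m).mp hts'
      by_cases hiv : Summable (fun n => 1/(μ n * b n))
      · -- then r = t + c/(μ n b n) is summable, contradiction
        apply hdiv
        have h1 : Summable (fun n => c * (1/(μ n * b n))) := hiv.mul_left c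
        have h2 : Summable (fun n => t n + c * (1/(μ n * b n))) := hts.add h1
        have heq : r = fun n => t n + c * (1/(μ n * b n)) := by
          funext n
          have hD := (hDpos n).ne'
          simp only [hr, ht]
          field_simp
          ring
        rw [heq]
        exact h2
      · -- then t n ≥ μ m / (μ n b n) for n ≥ m, so 1/(μ n b n) would be summable
        apply hiv
        apply (summable_nat_add_iff (f := fun n => 1/(μ n * b n)) m).mp
        have hcomp : ∀ n : ℕ, (1:ℝ)/(μ (n+m) * b (n+m)) ≤ (1/μ m) * t (n+m) := by
          intro n
          have hD := hDpos (n+m)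
          have hμm := hμpos m
          have hge : c + μ m ≤ ∑ i ∈ Finset.range (n+m+1), μ i := by
            have hsub : Finset.range (m+1) ⊆ Finset.range (n+m+1) :=
              Finset.range_subset_range.mpr (by omega)
            have h1 := Finset.sum_le_sum_of_subset_of_nonneg hsub
              (fun i _ _ => (hμpos i).le)
            rw [Finset.sum_range_succ] at h1
            rw [hc]
            linarith
          simp only [ht]
          have hDne : μ (n+m) * b (n+m) ≠ 0 := hD.ne'
          have hμmne : μ m ≠ 0 := hμm.ne'
          rw [div_le_iff₀ hD, mul_comm (1/μ m)]
          have heq2 : ((∑ i ∈ Finset.range (n+m+1), μ i) - c) / (μ (n+m) * b (n+m)) * (1/μ m)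
              * (μ (n+m) * b (n+m)) = ((∑ i ∈ Finset.range (n+m+1), μ i) - c) / μ m := by
            rw [div_mul_eq_mul_div, div_mul_eq_mul_div, mul_div_cancel_right₀ _ hDne, mul_one_div]
          rw [heq2, le_div_iff₀ hμm]
          linarith
        exact Summable.of_nonneg_of_le
          (fun n => (one_div_pos.mpr (hDpos (n+m))).le) hcomp (hts'.mul_left (1/μ m))
    -- divergence of the partial sums forces u to be unbounded
    have htend : Tendsto (fun N => ∑ k ∈ Finset.range N, t (k + m)) atTop atTop :=
      (not_summable_iff_tendsto_nat_atTop_of_nonneg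
        (fun n => htnonneg (n+m) (Nat.le_add_left m n))).mp htdiv
    have hgrow : ∀ N, u m + u m * (∑ k ∈ Finset.range N, t (k + m)) ≤ u (N + m) := by
      intro N
      induction N with
      | zero => simp
      | succ N ih =>
        have h1 := hdt (N + m) (Nat.le_add_left m N)
        have h2 : N + 1 + m = (N + m) + 1 := by omega
        rw [h2, Finset.sum_range_succ]
        linarith
    obtain ⟨N, hN⟩ := (tendsto_atTop.mp htend (Mu / u m + 1)).exists
    have hcancel : u m * (Mu / u m) = Mu := mul_div_cancel₀ Mu (ne_of_gt hum)
    have h6 : u m * (Mu / u m + 1) ≤ u m * (∑ k ∈ Finset.range N, t (k + m)) := by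
      have := (∑ k ∈ Finset.range N, t (k + m))
      nlinarith
    have := hMu (N + m)
    have := hgrow N
    nlinarith
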